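/- Let M be a k×k positive semidefinite matrix and ρ, ρ̂ density matrices with tr(Mρ) > 0 and tr(Mρ̂) > 0. Then (√M ρ √M)/tr(Mρ) = (√M ρ̂ √M)/tr(Mρ̂) if and only if there exists λ > 0 such that π ρ̂ π = λ · π ρ π, where π is the orthogonal projection onto the range (support) of M. -/

import Mathlib

open scoped ComplexOrder Classical
open Matrix

/-- The positive semidefinite square root of a matrix (junk value `0` if not PSD). -/
noncomputable def msqrt {k : ℕ} (M : Matrix (Fin k) (Fin k) ℂ) : Matrix (Fin k) (Fin k) ℂ :=
  if h : M.PosSemidef then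
    h.1.eigenvectorUnitary.1 * diagonal (((↑) : ℝ → ℂ) ∘ (Real.sqrt ·) ∘ h.1.eigenvalues) *
      (star h.1.eigenvectorUnitary : Matrix (Fin k) (Fin k) ℂ)
  else 0

/-- The quantum fidelity `F(ρ,σ) = (tr √(√ρ σ √ρ))²`. -/
noncomputable def fid {k : ℕ} (ρ σ : Matrix (Fin k) (Fin k) ℂ) : ℝ :=
  ((msqrt (msqrt ρ * σ * msqrt ρ)).trace).re ^ 2

/-- A density matrix: positive semidefinite with trace one. -/
def IsDensityMatrix {k : ℕ} (ρ : Matrix (Fin k) (Fin k) ℂ) : Prop :=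
  ρ.PosSemidef ∧ ρ.trace = 1

lemma mulVec_ext {k : ℕ} {A B : Matrix (Fin k) (Fin k) ℂ}
    (h : ∀ x, A.mulVec x = B.mulVec x) : A = B := by
  ext i j
  have := congrFun (h (Pi.single j 1)) i
  simpa [Matrix.mulVec, dotProduct, Pi.single_apply] using this

lemma proj_unique {k : ℕ} {p q : Matrix (Fin k) (Fin k) ℂ}
    (hp : p.IsHermitian) (hq : q.IsHermitian) (hp2 : p * p = p) (hq2 : q * q = q)
    (hker : ∀ x, p.mulVec x = 0 ↔ q.mulVec x = 0) : p = q := by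
  have key : ∀ (a b : Matrix (Fin k) (Fin k) ℂ), a * a = a →
      (∀ x, a.mulVec x = 0 → b.mulVec x = 0) → b * a = b := by
    intro a b ha hab
    apply mulVec_ext
    intro x
    have h1 : a.mulVec (a.mulVec x - x) = 0 := by
      rw [Matrix.mulVec_sub, Matrix.mulVec_mulVec, ha, sub_self]
    have h2 := hab _ h1
    rw [Matrix.mulVec_sub, sub_eq_zero] at h2
    rw [← Matrix.mulVec_mulVec, h2]
  have hqp : q * p = q := key p q hp2 (fun x hx => (hker x).mp hx)
  have hpq : p * q = p := key q p hq2 (fun x hx => (hker x).mpr hx)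
  calc p = p * q := hpq.symm
    _ = (q * p)ᴴ := by rw [Matrix.conjTranspose_mul, hp.eq, hq.eq]
    _ = qᴴ := by rw [hqp]
    _ = q := hq.eq

lemma trace_psd_re {k : ℕ} {A : Matrix (Fin k) (Fin k) ℂ} (hA : A.PosSemidef) :
    A.trace = ((A.trace.re : ℝ) : ℂ) := by
  have hdiag : ∀ i, 0 ≤ A i i := by
    intro i
    exact hA.diag_nonneg
  have htr : 0 ≤ A.trace := by
    rw [Matrix.trace]
    exact Finset.sum_nonneg fun i _ => hdiag i
  rw [Complex.nonneg_iff] at htr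
  exact (Complex.ext (by simp) (by simp [htr.2.symm])).symm

/-- The normalized conjugated states coincide iff `π ρ̂ π = λ · π ρ π` for some `λ > 0`,
where `π` is the orthogonal projection onto the support of `M`. -/
theorem stmt7 {k : ℕ} (M ρ ρhat π : Matrix (Fin k) (Fin k) ℂ)
    (hM : M.PosSemidef) (hρ : IsDensityMatrix ρ) (hρhat : IsDensityMatrix ρhat)
    (htρ : 0 < ((M * ρ).trace).re) (htρhat : 0 < ((M * ρhat).trace).re)
    (hπH : π.IsHermitian) (hπ2 : π * π = π)
    (hπsupp : ∀ x : Fin k → ℂ, π.mulVec x = 0 ↔ M.mulVec x = 0) :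
    ((M * ρ).trace)⁻¹ • (msqrt M * ρ * msqrt M)
      = ((M * ρhat).trace)⁻¹ • (msqrt M * ρhat * msqrt M) ↔
    ∃ lam : ℝ, 0 < lam ∧ π * ρhat * π = (lam : ℂ) • (π * ρ * π) := by
  classical
  have hmsqrt : msqrt M = hM.1.eigenvectorUnitary.1 *
      diagonal (((↑) : ℝ → ℂ) ∘ (Real.sqrt ·) ∘ hM.1.eigenvalues) *
      (star hM.1.eigenvectorUnitary : Matrix (Fin k) (Fin k) ℂ) := dif_pos hM
  set S := hM.1.eigenvectorUnitary.1 *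
      diagonal (((↑) : ℝ → ℂ) ∘ (Real.sqrt ·) ∘ hM.1.eigenvalues) *
      (star hM.1.eigenvectorUnitary : Matrix (Fin k) (Fin k) ℂ) with hSdef
  have hS : S.PosSemidef := by
    have hD : (diagonal (((↑) : ℝ → ℂ) ∘ (Real.sqrt ·) ∘ hM.1.eigenvalues)).PosSemidef :=
      Matrix.posSemidef_diagonal_iff.mpr fun i => by
        simp only [Function.comp]
        exact Complex.zero_le_real.mpr (Real.sqrt_nonneg _)
    have := hD.mul_mul_conjTranspose_same hM.1.eigenvectorUnitary.1
    rwa [hSdef, Matrix.star_eq_conjTranspose]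
  have hSH : S.IsHermitian := hS.1
  have hSS : S * S = M := by
    have hVV : (star hM.1.eigenvectorUnitary : Matrix (Fin k) (Fin k) ℂ) *
        hM.1.eigenvectorUnitary.1 = 1 := by
      exact Matrix.mem_unitaryGroup_iff'.mp hM.1.eigenvectorUnitary.2
    have hspM := hM.1.spectral_theorem
    rw [Unitary.conjStarAlgAut_apply] at hspM
    conv_rhs => rw [hspM]
    rw [hSdef]
    calc _ = hM.1.eigenvectorUnitary.1 *
          (diagonal (((↑) : ℝ → ℂ) ∘ (Real.sqrt ·) ∘ hM.1.eigenvalues) *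
          ((star hM.1.eigenvectorUnitary : Matrix (Fin k) (Fin k) ℂ) *
          hM.1.eigenvectorUnitary.1) *
          diagonal (((↑) : ℝ → ℂ) ∘ (Real.sqrt ·) ∘ hM.1.eigenvalues)) *
          (star hM.1.eigenvectorUnitary : Matrix (Fin k) (Fin k) ℂ) := by
            simp only [mul_assoc]
      _ = _ := by
        rw [hVV, mul_one, Matrix.diagonal_mul_diagonal]
        congr 2
        apply congrArg
        funext i
        simp only [Function.comp]
        rw [← Complex.ofReal_mul, Real.mul_self_sqrt (hM.eigenvalues_nonneg i)]
        rfl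
  clear_value S
  -- kernel of S = kernel of M
  have hker : ∀ x, S.mulVec x = 0 ↔ M.mulVec x = 0 := by
    intro x
    constructor
    · intro h
      rw [← hSS, ← Matrix.mulVec_mulVec, h, Matrix.mulVec_zero]
    · intro h
      have h0 : star x ⬝ᵥ M *ᵥ x = 0 := by rw [h, dotProduct_zero]
      have : star (S.mulVec x) ⬝ᵥ (S.mulVec x) = 0 := by
        rw [Matrix.star_mulVec, hSH.eq, ← dotProduct_mulVec,
          Matrix.mulVec_mulVec, hSS]
        exact h0
      exact dotProduct_star_self_eq_zero.mp this
  have hπker : ∀ x, π.mulVec x = 0 ↔ S.mulVec x = 0 :=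
    fun x => (hπsupp x).trans (hker x).symm
  -- S * π = S and π * S = S
  have hSπ : S * π = S := by
    apply mulVec_ext
    intro x
    rw [← Matrix.mulVec_mulVec]
    have h1 : π.mulVec (π.mulVec x - x) = 0 := by
      rw [Matrix.mulVec_sub, Matrix.mulVec_mulVec, hπ2, sub_self]
    have h2 := (hπker _).mp h1
    rw [Matrix.mulVec_sub, sub_eq_zero] at h2
    exact h2
  have hπS : π * S = S := by
    have := congrArg Matrix.conjTranspose hSπ
    rwa [Matrix.conjTranspose_mul, hπH.eq, hSH.eq] at this
  -- traces are real
  have hSρS : (S * ρ * S).PosSemidef := by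
    have := hρ.1.mul_mul_conjTranspose_same S
    rwa [hSH.eq] at this
  have hSρhatS : (S * ρhat * S).PosSemidef := by
    have := hρhat.1.mul_mul_conjTranspose_same S
    rwa [hSH.eq] at this
  have htrρ : (M * ρ).trace = (S * ρ * S).trace := by
    rw [← hSS, Matrix.trace_mul_comm (S * ρ) S, ← mul_assoc]
  have htrρhat : (M * ρhat).trace = (S * ρhat * S).trace := by
    rw [← hSS, Matrix.trace_mul_comm (S * ρhat) S, ← mul_assoc]
  have hρre : (M * ρ).trace = (((M * ρ).trace.re : ℝ) : ℂ) := by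
    rw [htrρ]; exact trace_psd_re hSρS
  have hρhatre : (M * ρhat).trace = (((M * ρhat).trace.re : ℝ) : ℂ) := by
    rw [htrρhat]; exact trace_psd_re hSρhatS
  set a : ℝ := (M * ρ).trace.re with ha
  set b : ℝ := (M * ρhat).trace.re with hb
  have haC : (M * ρ).trace = (a : ℂ) := hρre
  have hbC : (M * ρhat).trace = (b : ℂ) := hρhatre
  have ha0 : (a : ℂ) ≠ 0 := by exact_mod_cast htρ.ne'
  have hb0 : (b : ℂ) ≠ 0 := by exact_mod_cast htρhat.ne'
  -- pseudo-inverse of S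
  set U : Matrix (Fin k) (Fin k) ℂ := (hSH.eigenvectorUnitary : Matrix (Fin k) (Fin k) ℂ) with hU
  have hUU : star U * U = 1 := Matrix.mem_unitaryGroup_iff'.mp hSH.eigenvectorUnitary.2
  have hUU' : U * star U = 1 := Matrix.mem_unitaryGroup_iff.mp hSH.eigenvectorUnitary.2
  set d : Fin k → ℝ := hSH.eigenvalues with hd
  have hspec : S = U * Matrix.diagonal (RCLike.ofReal ∘ d) * star U := by
    have := hSH.spectral_theorem; rwa [Unitary.conjStarAlgAut_apply] at this
  set T : Matrix (Fin k) (Fin k) ℂ :=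
    U * Matrix.diagonal (fun i => if d i = 0 then 0 else ((d i)⁻¹ : ℂ)) * star U with hT
  set π' : Matrix (Fin k) (Fin k) ℂ :=
    U * Matrix.diagonal (fun i => if d i = 0 then (0 : ℂ) else 1) * star U with hπ'
  have hdiagmul : ∀ (f g : Fin k → ℂ),
      (U * Matrix.diagonal f * star U) * (U * Matrix.diagonal g * star U)
        = U * Matrix.diagonal (fun i => f i * g i) * star U := by
    intro f g
    calc (U * Matrix.diagonal f * star U) * (U * Matrix.diagonal g * star U)
        = U * Matrix.diagonal f * (star U * U) * Matrix.diagonal g * star U := by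
          simp only [mul_assoc]
      _ = U * (Matrix.diagonal f * Matrix.diagonal g) * star U := by
          rw [hUU]; simp only [mul_assoc, one_mul]
      _ = U * Matrix.diagonal (fun i => f i * g i) * star U := by
          rw [Matrix.diagonal_mul_diagonal]
  have hTS : T * S = π' := by
    rw [hT, hspec, hπ', hdiagmul]
    have hfg : (fun i => (if d i = 0 then 0 else ((d i)⁻¹ : ℂ)) * (RCLike.ofReal ∘ d) i)
        = (fun i => if d i = 0 then (0 : ℂ) else 1) := by
      funext i
      by_cases h : d i = 0
      · simp [h, Function.comp]
      · simp only [h, if_false, Function.comp]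
        exact inv_mul_cancel₀ (by simpa using h)
    rw [hfg]
  have hST : S * T = π' := by
    rw [hT, hspec, hπ', hdiagmul]
    have hfg : (fun i => (RCLike.ofReal ∘ d) i * (if d i = 0 then 0 else ((d i)⁻¹ : ℂ)))
        = (fun i => if d i = 0 then (0 : ℂ) else 1) := by
      funext i
      by_cases h : d i = 0
      · simp [h, Function.comp]
      · simp only [h, if_false, Function.comp]
        exact mul_inv_cancel₀ (by simpa using h)
    rw [hfg]
  -- π' = π
  have hπ'H : π'.IsHermitian := by
    have he : (star (fun i => if d i = 0 then (0 : ℂ) else 1) : Fin k → ℂ)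
        = (fun i => if d i = 0 then (0 : ℂ) else 1) := by
      funext i
      by_cases h : d i = 0 <;> simp [h]
    rw [hπ', Matrix.IsHermitian, Matrix.conjTranspose_mul, Matrix.conjTranspose_mul,
      Matrix.diagonal_conjTranspose, he, ← Matrix.star_eq_conjTranspose,
      ← Matrix.star_eq_conjTranspose, star_star, mul_assoc]
  have hπ'2 : π' * π' = π' := by
    rw [hπ', hdiagmul]
    have hfg : (fun i => (if d i = 0 then (0 : ℂ) else 1) * (if d i = 0 then (0 : ℂ) else 1))
        = (fun i => if d i = 0 then (0 : ℂ) else 1) := by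
      funext i
      by_cases h : d i = 0 <;> simp [h]
    rw [hfg]
  have hUinj : ∀ z : Fin k → ℂ, U.mulVec z = 0 → z = 0 := by
    intro z hz
    have : (star U * U).mulVec z = 0 := by
      rw [← Matrix.mulVec_mulVec, hz, Matrix.mulVec_zero]
    rwa [hUU, Matrix.one_mulVec] at this
  have hπ'ker : ∀ x, π'.mulVec x = 0 ↔ S.mulVec x = 0 := by
    intro x
    have key : ∀ f : Fin k → ℂ, (U * Matrix.diagonal f * star U).mulVec x = 0 ↔
        ∀ i, f i * (star U).mulVec x i = 0 := by
      intro f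
      rw [← Matrix.mulVec_mulVec, ← Matrix.mulVec_mulVec]
      constructor
      · intro h
        have := hUinj _ h
        intro i
        have := congrFun this i
        simpa [Matrix.mulVec_diagonal] using this
      · intro h
        have : (Matrix.diagonal f).mulVec ((star U).mulVec x) = 0 := by
          funext i
          simpa [Matrix.mulVec_diagonal] using h i
        rw [this, Matrix.mulVec_zero]
    rw [hπ', key, hspec, key]
    constructor
    · intro h i
      have := h i
      by_cases hdi : d i = 0
      · simp [hdi, Function.comp]
      · simp [hdi] at this
        simp [this, Function.comp]
    · intro h i
      have := h i
      by_cases hdi : d i = 0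
      · simp [hdi]
      · have hdi' : (RCLike.ofReal (d i) : ℂ) ≠ 0 := by
          simpa using hdi
        simp only [Function.comp] at this
        rcases mul_eq_zero.mp this with h1 | h1
        · exact absurd h1 hdi'
        · simp [hdi, h1]
  have hππ' : π = π' := proj_unique hπH hπ'H hπ2 hπ'2
    (fun x => (hπker x).trans (hπ'ker x).symm)
  rw [hmsqrt, haC, hbC]
  constructor
  · intro h
    refine ⟨b / a, div_pos htρhat htρ, ?_⟩
    have h2 := congrArg (fun X => T * X * T) h
    simp only [Matrix.mul_smul, Matrix.smul_mul] at h2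
    have expand : ∀ σ : Matrix (Fin k) (Fin k) ℂ, T * (S * σ * S) * T = π * σ * π := by
      intro σ
      calc T * (S * σ * S) * T = (T * S) * σ * (S * T) := by simp only [mul_assoc]
        _ = π' * σ * π' := by rw [hTS, hST]
        _ = π * σ * π := by rw [hππ']
    rw [expand, expand] at h2
    have h3 := congrArg (fun X => (b : ℂ) • X) h2
    simp only [smul_smul] at h3
    rw [mul_inv_cancel₀ hb0, one_smul] at h3
    rw [← h3]
    congr 1
    push_cast
    ring
  · rintro ⟨lam, hlam, hl⟩
    rw [hππ'] at hl
    have hSrr : S * ρhat * S = (lam : ℂ) • (S * ρ * S) := by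
      calc S * ρhat * S = (S * π') * ρhat * (π' * S) := by
            rw [← hππ', hSπ, hπS]
        _ = S * (π' * ρhat * π') * S := by simp only [mul_assoc]
        _ = S * ((lam : ℂ) • (π' * ρ * π')) * S := by rw [hl]
        _ = (lam : ℂ) • (S * (π' * ρ * π') * S) := by
            simp only [Matrix.mul_smul, Matrix.smul_mul]
        _ = (lam : ℂ) • ((S * π') * ρ * (π' * S)) := by simp only [mul_assoc]
        _ = (lam : ℂ) • (S * ρ * S) := by rw [← hππ', hSπ, hπS]
    have htr : (b : ℂ) = (lam : ℂ) * (a : ℂ) := by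
      rw [← haC, ← hbC, htrρ, htrρhat, hSrr, Matrix.trace_smul]
      simp
    have hlam0 : (lam : ℂ) ≠ 0 := by exact_mod_cast hlam.ne'
    rw [hSrr, htr, smul_smul]
    congr 1
    field_simp
  done
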